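/- arXiv:1901.11464 — 2 statements merged into one kernel-verified Lean document; each statement's English description precedes it below -/
import Mathlib

section
/- If a real triplet (s1, s2, s3) with s1 = 0 satisfies the P3P system, then s2 = ±c, s3 = ±b, and cos²α = cos²A, where A is the angle of the triangle with sides a, b, c at the vertex opposite side a (i.e., cos A = (b² + c² − a²)/(2bc)). -/
/-- If a real triplet with `s1 = 0` satisfies the P3P system for a nondegenerate triangle
with sides `a, b, c`, then `s2 = ±c`, `s3 = ±b`, and `cos²α = cos²∠A` where
`cos ∠A = (b² + c² - a²)/(2bc)`. -/
theorem stmt_2 (a b c α β γ s1 s2 s3 : ℝ)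
    (ha : 0 < a) (hb : 0 < b) (hc : 0 < c)
    (hab : a < b + c) (hbc : b < a + c) (hca : c < a + b)
    (hs1 : s1 = 0)
    (h1 : s1 ^ 2 + s2 ^ 2 - 2 * Real.cos γ * s1 * s2 = c ^ 2)
    (h2 : s1 ^ 2 + s3 ^ 2 - 2 * Real.cos β * s1 * s3 = b ^ 2)
    (h3 : s2 ^ 2 + s3 ^ 2 - 2 * Real.cos α * s2 * s3 = a ^ 2) :
    (s2 = c ∨ s2 = -c) ∧ (s3 = b ∨ s3 = -b) ∧
    Real.cos α ^ 2 = ((b ^ 2 + c ^ 2 - a ^ 2) / (2 * b * c)) ^ 2 := by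
  subst hs1
  have h1' : s2 ^ 2 = c ^ 2 := by nlinarith
  have h2' : s3 ^ 2 = b ^ 2 := by nlinarith
  have hs2 : s2 = c ∨ s2 = -c := by
    rcases mul_eq_zero.mp (show (s2 - c) * (s2 + c) = 0 by nlinarith) with h | h
    · left; linarith
    · right; linarith
  have hs3 : s3 = b ∨ s3 = -b := by
    rcases mul_eq_zero.mp (show (s3 - b) * (s3 + b) = 0 by nlinarith) with h | h
    · left; linarith
    · right; linarith
  refine ⟨hs2, hs3, ?_⟩
  have key : 2 * Real.cos α * s2 * s3 = b ^ 2 + c ^ 2 - a ^ 2 := by nlinarith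
  have hsq : s2 ^ 2 * s3 ^ 2 = b ^ 2 * c ^ 2 := by rw [h1', h2']; ring
  have hbc' : (2 * b * c) ≠ 0 := by positivity
  field_simp
  nlinarith [sq_nonneg (Real.cos α), key, hsq]
end

section
/- Two right circular cones in ℝ³ with common apex, axes making angle A ∈ (0, π), and half-angles β0, γ0 ∈ [0, π] have a common ray (intersect in at least one ray from the apex) if and only if cos²β0 + cos²γ0 − sin²A − 2·cosβ0·cosγ0·cosA ≤ 0. -/
set_option maxHeartbeats 1000000


open InnerProductGeometry

section AuxCone

open RealInnerProductSpace

variable {E : Type*} [NormedAddCommGroup E] [InnerProductSpace ℝ E]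

lemma aux_angle_eq_of_inner {x u : E} (hx : ‖x‖ = 1) (hu : ‖u‖ = 1) {β : ℝ}
    (hβ : β ∈ Set.Icc 0 Real.pi) (h : ⟪x, u⟫ = Real.cos β) :
    angle x u = β := by
  have h1 := cos_angle x u
  rw [hx, hu] at h1
  simp only [mul_one, div_one] at h1
  exact Real.injOn_cos ⟨angle_nonneg x u, angle_le_pi x u⟩ hβ (by rw [h1, h])

end AuxCone

/-- Two right circular cones in `ℝ³` with common apex at the origin, unit axes `u1, u2`
making angle `A ∈ (0, π)`, and half-angles `β0, γ0 ∈ [0, π]` have a common ray iff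
`cos²β0 + cos²γ0 - sin²A - 2cosβ0·cosγ0·cosA ≤ 0`. -/
theorem stmt_14 (u1 u2 : EuclideanSpace ℝ (Fin 3))
    (hu1 : ‖u1‖ = 1) (hu2 : ‖u2‖ = 1)
    (A β0 γ0 : ℝ) (hA : A ∈ Set.Ioo 0 Real.pi)
    (hangle : angle u1 u2 = A)
    (hβ0 : β0 ∈ Set.Icc 0 Real.pi) (hγ0 : γ0 ∈ Set.Icc 0 Real.pi) :
    (∃ x : EuclideanSpace ℝ (Fin 3), x ≠ 0 ∧ angle x u1 = β0 ∧ angle x u2 = γ0) ↔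
    Real.cos β0 ^ 2 + Real.cos γ0 ^ 2 - Real.sin A ^ 2 -
      2 * Real.cos β0 * Real.cos γ0 * Real.cos A ≤ 0 := by
  open RealInnerProductSpace in
  set b := Real.cos β0 with hb
  set c := Real.cos γ0 with hc
  set cA := Real.cos A with hcA
  have hsinpos : 0 < Real.sin A := Real.sin_pos_of_pos_of_lt_pi hA.1 hA.2
  set D := Real.sin A ^ 2 with hD
  have hDpos : 0 < D := by positivity
  have hDeq : D = 1 - cA ^ 2 := by
    have := Real.sin_sq_add_cos_sq A; linarith
  have hu12 : ⟪u1, u2⟫ = cA := by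
    have h1 := cos_angle u1 u2
    rw [hu1, hu2, hangle] at h1
    simpa using h1.symm
  have hu21 : ⟪u2, u1⟫ = cA := by rw [real_inner_comm]; exact hu12
  have hu11 : ⟪u1, u1⟫ = 1 := by
    rw [real_inner_self_eq_norm_sq, hu1]; norm_num
  have hu22 : ⟪u2, u2⟫ = 1 := by
    rw [real_inner_self_eq_norm_sq, hu2]; norm_num
  constructor
  · rintro ⟨x, hx0, h1, h2⟩
    have hxn : (0:ℝ) < ‖x‖ := norm_pos_iff.mpr hx0
    set y : EuclideanSpace ℝ (Fin 3) := ‖x‖⁻¹ • x with hy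
    have hyn : ‖y‖ = 1 := by
      rw [hy, norm_smul]; simp [abs_of_pos (inv_pos.mpr hxn)]
      field_simp
    have hy1 : ⟪y, u1⟫ = b := by
      have hcos := cos_angle x u1
      rw [h1, hu1, mul_one] at hcos
      rw [hy, real_inner_smul_left, hb, hcos]
      field_simp
    have hy2 : ⟪y, u2⟫ = c := by
      have hcos := cos_angle x u2
      rw [h2, hu2, mul_one] at hcos
      rw [hy, real_inner_smul_left, hc, hcos]
      field_simp
    have hu1y : ⟪u1, y⟫ = b := by rw [real_inner_comm]; exact hy1
    have hu2y : ⟪u2, y⟫ = c := by rw [real_inner_comm]; exact hy2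
    have hyy : ⟪y, y⟫ = 1 := by
      rw [real_inner_self_eq_norm_sq, hyn]; norm_num
    set w : EuclideanSpace ℝ (Fin 3) :=
      D • y - (b - c * cA) • u1 - (c - b * cA) • u2 with hw
    have hww : (0:ℝ) ≤ ⟪w, w⟫ := real_inner_self_nonneg
    have hexp : ⟪w, w⟫ = D * (D - (b ^ 2 + c ^ 2 - 2 * b * c * cA)) := by
      rw [hw]
      simp only [inner_sub_left, inner_sub_right, real_inner_smul_left,
        real_inner_smul_right, hyy, hy1, hy2, hu1y, hu2y, hu11, hu22, hu12, hu21]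
      rw [hDeq]; ring
    rw [hexp] at hww
    nlinarith [hww, hDpos]
  · intro hineq
    classical
    set E := b ^ 2 + c ^ 2 - 2 * b * c * cA with hE
    have hED : E ≤ D := by rw [hE, hD]; linarith
    -- find a unit vector orthogonal to u1 and u2
    set K : Submodule ℝ (EuclideanSpace ℝ (Fin 3)) :=
      Submodule.span ℝ (({u1, u2} : Finset (EuclideanSpace ℝ (Fin 3))) : Set _) with hK
    have hKle : Module.finrank ℝ K ≤ 2 := by
      refine (finrank_span_finset_le_card _).trans ?_
      exact (Finset.card_insert_le _ _).trans (by simp)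
    have hKorth : Kᗮ ≠ ⊥ := by
      intro hbot
      have hsum := K.finrank_add_finrank_orthogonal
      rw [hbot] at hsum
      simp [finrank_euclideanSpace_fin] at hsum
      omega
    obtain ⟨w0, hw0K, hw00⟩ := Submodule.exists_mem_ne_zero_of_ne_bot hKorth
    set w1 : EuclideanSpace ℝ (Fin 3) := ‖w0‖⁻¹ • w0 with hw1
    have hw0n : (0:ℝ) < ‖w0‖ := norm_pos_iff.mpr hw00
    have hw1n : ‖w1‖ = 1 := by
      rw [hw1, norm_smul]; simp [abs_of_pos (inv_pos.mpr hw0n)]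
      field_simp
    have hw1K : w1 ∈ Kᗮ := Submodule.smul_mem _ _ hw0K
    have h1w : ⟪u1, w1⟫ = 0 :=
      hw1K u1 (Submodule.subset_span (by simp))
    have h2w : ⟪u2, w1⟫ = 0 :=
      hw1K u2 (Submodule.subset_span (by simp))
    have hw1' : ⟪w1, u1⟫ = 0 := by rw [real_inner_comm]; exact h1w
    have hw2' : ⟪w1, u2⟫ = 0 := by rw [real_inner_comm]; exact h2w
    have hw1w1 : ⟪w1, w1⟫ = 1 := by
      rw [real_inner_self_eq_norm_sq, hw1n]; norm_num
    set r : ℝ := Real.sqrt (1 - E / D) with hr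
    have hrsq : r ^ 2 = 1 - E / D := by
      rw [hr, Real.sq_sqrt]
      have : E / D ≤ 1 := (div_le_one hDpos).mpr hED
      linarith
    set x : EuclideanSpace ℝ (Fin 3) :=
      ((b - c * cA) / D) • u1 + ((c - b * cA) / D) • u2 + r • w1 with hx
    have hxx : ⟪x, x⟫ = 1 := by
      rw [hx]
      simp only [inner_add_left, inner_add_right, real_inner_smul_left,
        real_inner_smul_right, hu11, hu22, hu12, hu21, h1w, h2w, hw1', hw2', hw1w1]
      simp only [mul_zero, zero_mul, mul_one, add_zero, zero_add]
      rw [show r * r = r ^ 2 by ring, hrsq]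
      have hDne : D ≠ 0 := ne_of_gt hDpos
      field_simp
      rw [hDeq, hE]
      ring
    have hxn : ‖x‖ = 1 := by
      have := real_inner_self_eq_norm_sq x
      rw [hxx] at this
      nlinarith [norm_nonneg x]
    have hx1 : ⟪x, u1⟫ = b := by
      rw [hx]
      simp only [inner_add_left, real_inner_smul_left, hu11, hu21, hw1']
      have hDne : D ≠ 0 := ne_of_gt hDpos
      field_simp
      rw [hDeq]; ring
    have hx2 : ⟪x, u2⟫ = c := by
      rw [hx]
      simp only [inner_add_left, real_inner_smul_left, hu22, hu12, hw2']
      have hDne : D ≠ 0 := ne_of_gt hDpos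
      field_simp
      rw [hDeq]; ring
    refine ⟨x, ?_, ?_, ?_⟩
    · intro h; rw [h] at hxn; simp at hxn
    · exact aux_angle_eq_of_inner hxn hu1 hβ0 hx1
    · exact aux_angle_eq_of_inner hxn hu2 hγ0 hx2
end
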